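/- Let R be an associative unital ring, ι a linearly ordered set, F a free left R-module with basis (b_i)_{i∈ι}, G a submodule of F, and α ∈ ι. Put G_{≤α} := G ∩ span_R{b_i : i ≤ α} and G_{<α} := G ∩ span_R{b_i : i < α}. Then there exists an injective R-linear map from the quotient module G_{≤α}/G_{<α} into R (viewed as a left module over itself); in particular this quotient is isomorphic to a left ideal of R. -/

import Mathlib

/-!
STATEMENT 8: for a free module `F` with basis `(b i)_{i ∈ ι}` over a linearly ordered
index set, a submodule `G`, and `α ∈ ι`, the quotient `G_{≤α} / G_{<α}` embeds
`R`-linearly into `R`; in particular it is isomorphic to a left ideal of `R`.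
-/

universe u v w

theorem exists_injective_linearMap_to_ring {R : Type u} [Ring R] {ι : Type w}
    [LinearOrder ι] {F : Type v} [AddCommGroup F] [Module R F] (b : Module.Basis ι R F)
    (G : Submodule R F) (α : ι) :
    ∃ φ : (↥(G ⊓ Submodule.span R (⇑b '' {i : ι | i ≤ α})) ⧸
        (Submodule.comap
          (G ⊓ Submodule.span R (⇑b '' {i : ι | i ≤ α})).subtype
          (G ⊓ Submodule.span R (⇑b '' {i : ι | i < α})))) →ₗ[R] R,
      Function.Injective φ := by
  set Gle := G ⊓ Submodule.span R (⇑b '' {i : ι | i ≤ α}) with hGle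
  set p := Submodule.comap Gle.subtype (G ⊓ Submodule.span R (⇑b '' {i : ι | i < α})) with hp
  let f : Gle →ₗ[R] R := (b.coord α).comp Gle.subtype
  have hker : LinearMap.ker f = p := by
    ext x
    simp only [LinearMap.mem_ker, f, LinearMap.comp_apply, Module.Basis.coord_apply, hp,
      Submodule.mem_comap, Submodule.mem_inf, Submodule.coe_subtype]
    constructor
    · intro h
      refine ⟨x.2.1, ?_⟩
      have hle : ↑(b.repr (x : F)).support ⊆ {i : ι | i ≤ α} :=
        b.mem_span_image.1 x.2.2
      refine b.mem_span_image.2 ?_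
      intro i hi
      have := hle hi
      simp only [Set.mem_setOf_eq] at this ⊢
      rcases lt_or_eq_of_le this with h' | h'
      · exact h'
      · exact absurd h (by simpa [h'] using Finsupp.mem_support_iff.1 hi)
    · intro ⟨_, h⟩
      have := b.mem_span_image.1 h
      by_contra hne
      exact absurd (this (Finsupp.mem_support_iff.2 hne)) (by simp)
  refine ⟨p.liftQ f hker.ge, ?_⟩
  rw [← LinearMap.ker_eq_bot]
  exact Submodule.ker_liftQ_eq_bot _ _ _ hker.le
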